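/- Let T be a light tournament containing at least one directed triangle. Then there exist distinct vertices u and v of T such that the dichromatic number of T[N⁺(u)] is at most 3, the dichromatic number of T[N⁻(v)] is at most 3, and the dichromatic number of T[N⁻(v) ∪ N⁺(u)] is at most 5. -/
import Mathlib


/-- A tournament on a vertex type `V`: for every two distinct vertices exactly one
of the two possible arcs is present, and there are no loops. -/
structure Tournament (V : Type) where
  arc : V → V → Prop
  asymm : ∀ u v, arc u v → ¬ arc v u
  total : ∀ u v, u ≠ v → arc u v ∨ arc v u

namespace Tournament

variable {V : Type}

/-- A set of vertices is transitive (acyclic) if it contains no directed triangle. -/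
def IsTransitiveSet (T : Tournament V) (S : Set V) : Prop :=
  ∀ a ∈ S, ∀ b ∈ S, ∀ c ∈ S, ¬ (T.arc a b ∧ T.arc b c ∧ T.arc c a)

/-- Out-neighborhood `N⁺(v)`. -/
def outN (T : Tournament V) (v : V) : Set V := {w | T.arc v w}

/-- In-neighborhood `N⁻(v)`. -/
def inN (T : Tournament V) (v : V) : Set V := {w | T.arc w v}

/-- Arc neighborhood `N(uv)` of an arc `u → v`: vertices forming a directed
triangle with the arc. -/
def arcNbhd (T : Tournament V) (u v : V) : Set V := {w | T.arc v w ∧ T.arc w u}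

/-- `T.ColorableOn S k` means the induced subtournament `T[S]` can be partitioned
into at most `k` transitive sets. -/
def ColorableOn (T : Tournament V) (S : Set V) (k : ℕ) : Prop :=
  ∃ f : V → ℕ, (∀ v ∈ S, f v < k) ∧ ∀ i : ℕ, T.IsTransitiveSet {v | v ∈ S ∧ f v = i}

/-- The dichromatic number of `T`: the least `k` such that `V(T)` can be
partitioned into `k` transitive sets. -/
noncomputable def dichromaticNumber (T : Tournament V) : ℕ :=
  sInf {k | T.ColorableOn Set.univ k}

/-- An arc `u → v` is heavy if `N(uv)` contains a directed triangle. -/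
def IsHeavy (T : Tournament V) (u v : V) : Prop :=
  T.arc u v ∧ ∃ a b c,
    a ∈ T.arcNbhd u v ∧ b ∈ T.arcNbhd u v ∧ c ∈ T.arcNbhd u v ∧
    T.arc a b ∧ T.arc b c ∧ T.arc c a

/-- A tournament is light if it has no heavy arc. -/
def IsLight (T : Tournament V) : Prop := ∀ u v, ¬ T.IsHeavy u v

/-- The induced subtournament `T[S]` is light: for every arc within `S`, the part
of its arc neighborhood inside `S` is transitive. -/
def LightOn (T : Tournament V) (S : Set V) : Prop :=
  ∀ u ∈ S, ∀ v ∈ S, T.arc u v → T.IsTransitiveSet (T.arcNbhd u v ∩ S)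

/-- `S` is the vertex set of a directed triangle. -/
def IsTriangle (T : Tournament V) (S : Set V) : Prop :=
  ∃ a b c, S = {a, b, c} ∧ T.arc a b ∧ T.arc b c ∧ T.arc c a

/-- `S ⇒ U`: every arc between `S` and `U` is directed from `S` to `U`. -/
def Beats (T : Tournament V) (S U : Set V) : Prop :=
  ∀ s ∈ S, ∀ u ∈ U, T.arc s u

/-- `X 0, …, X (L-1)` is a `C₃`-chain of length `L`: pairwise vertex-disjoint
directed triangles with `X i ⇒ X (i+1)`. -/
def IsC3Chain (T : Tournament V) (X : ℕ → Set V) (L : ℕ) : Prop :=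
  (∀ i < L, T.IsTriangle (X i)) ∧
  (∀ i < L, ∀ j < L, i ≠ j → Disjoint (X i) (X j)) ∧
  (∀ i, i + 1 < L → T.Beats (X i) (X (i + 1)))

/-- `v 0, …, v k` are the vertices of a shortest directed path from `v 0` to `v k`:
consecutive arcs are present, and no directed path (walk) from `v 0` to `v k`
has fewer than `k` arcs. -/
def IsShortestPath (T : Tournament V) (v : ℕ → V) (k : ℕ) : Prop :=
  (∀ i < k, T.arc (v i) (v (i + 1))) ∧
  (∀ m : ℕ, ∀ p : ℕ → V, p 0 = v 0 → p m = v k →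
    (∀ i < m, T.arc (p i) (p (i + 1))) → k ≤ m)

/-- The path decomposition `D 0, …, D (k+1)` associated to the path `v 0, …, v k`:
`D 0 = N⁺(v 0)`, `D i = N(e i) \ (D 0 ∪ ⋯ ∪ D (i-1))` for `1 ≤ i ≤ k` where
`e i` is the arc `v (i-1) → v i`, and `D (k+1) = N⁻(v k) \ (D 0 ∪ ⋯ ∪ D k)`. -/
def PathDecomp (T : Tournament V) (v : ℕ → V) (k : ℕ) (D : ℕ → Set V) : Prop :=
  D 0 = T.outN (v 0) ∧
  (∀ i, 1 ≤ i → i ≤ k → D i = T.arcNbhd (v (i - 1)) (v i) \ ⋃ j < i, D j) ∧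
  D (k + 1) = T.inN (v k) \ ⋃ j < k + 1, D j

end Tournament

namespace LightAux

open Tournament

variable {V : Type}

lemma irrefl (T : Tournament V) (a : V) : ¬ T.arc a a := fun h => T.asymm a a h h

lemma trans_mono {T : Tournament V} {S S' : Set V} (h : T.IsTransitiveSet S)
    (hsub : S' ⊆ S) : T.IsTransitiveSet S' :=
  fun a ha b hb c hc => h a (hsub ha) b (hsub hb) c (hsub hc)

lemma light_nbhd {T : Tournament V} (hl : T.IsLight) {a b : V} (hab : T.arc a b) :
    T.IsTransitiveSet (T.arcNbhd a b) := by
  intro x hx y hy z hz h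
  exact hl a b ⟨hab, x, y, z, hx, hy, hz, h.1, h.2.1, h.2.2⟩

lemma step {T : Tournament V} (hl : T.IsLight) {X Y : Set V}
    (hY : T.IsTriangle Y) (hb : T.Beats X Y) {w q : V} (hq : q ∈ X) (hwq : T.arc w q) :
    ∃ p ∈ Y, T.arc w p := by
  obtain ⟨a, b, c, rfl, hab, hbc, hca⟩ := hY
  have hamem : a ∈ ({a, b, c} : Set V) := by simp
  have hbmem : b ∈ ({a, b, c} : Set V) := by simp
  have hcmem : c ∈ ({a, b, c} : Set V) := by simp
  by_cases hwa : w = a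
  · exact ⟨b, hbmem, hwa ▸ hab⟩
  by_cases hwb : w = b
  · exact ⟨c, hcmem, hwb ▸ hbc⟩
  by_cases hwc : w = c
  · exact ⟨a, hamem, hwc ▸ hca⟩
  by_contra hno
  push_neg at hno
  have hmem : ∀ p ∈ ({a, b, c} : Set V), p ∈ T.arcNbhd w q := by
    intro p hp
    have hpne : p ≠ w := by
      intro he
      simp only [Set.mem_insert_iff, Set.mem_singleton_iff] at hp
      rcases hp with h | h | h
      · exact hwa (he.symm.trans h)
      · exact hwb (he.symm.trans h)
      · exact hwc (he.symm.trans h)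
    exact ⟨hb q hq p hp, (T.total p w hpne).resolve_right (hno p hp)⟩
  exact light_nbhd hl hwq a (hmem a hamem) b (hmem b hbmem) c (hmem c hcmem) ⟨hab, hbc, hca⟩

lemma prop {T : Tournament V} (hl : T.IsLight) {X : ℕ → Set V} {L : ℕ}
    (htris : ∀ i < L, T.IsTriangle (X i))
    (hbeats : ∀ i, i + 1 < L → T.Beats (X i) (X (i + 1)))
    {w : V} (i d : ℕ) (hd : i + d < L) (h : ∃ q ∈ X i, T.arc w q) :
    ∃ q ∈ X (i + d), T.arc w q := by
  induction d with
  | zero => exact h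
  | succ n ih =>
    obtain ⟨q, hq, hwq⟩ := ih (by omega)
    have hres := step hl (htris (i + n + 1) (by omega)) (hbeats (i + n) (by omega)) hq hwq
    have he : i + (n + 1) = i + n + 1 := by omega
    rw [he]
    exact hres

lemma chain_le_card [Fintype V] {T : Tournament V} {X : ℕ → Set V} {L : ℕ}
    (hc : T.IsC3Chain X L) : L ≤ Fintype.card V := by
  classical
  have hne : ∀ i : Fin L, ∃ x : V, x ∈ X i.1 := by
    intro i
    obtain ⟨a, b, c, hs, -⟩ := hc.1 i.1 i.2
    exact ⟨a, by rw [hs]; simp⟩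
  choose f hf using hne
  have hinj : Function.Injective f := by
    intro i j hij
    by_contra hne2
    have hd := hc.2.1 i.1 i.2 j.1 j.2 (fun h => hne2 (Fin.ext h))
    exact Set.disjoint_left.1 hd (hf i) (hij ▸ hf j)
  calc L = Fintype.card (Fin L) := (Fintype.card_fin L).symm
    _ ≤ Fintype.card V := Fintype.card_le_of_injective f hinj

lemma prepend {T : Tournament V} (hl : T.IsLight) {X : ℕ → Set V} {L : ℕ}
    (hc : T.IsC3Chain X L) (hL : 1 ≤ L) {S : Set V} (hS : T.IsTriangle S)
    (hb : T.Beats S (X 0)) :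
    T.IsC3Chain (fun n => if n = 0 then S else X (n - 1)) (L + 1) := by
  obtain ⟨htris, hdisj, hbeats⟩ := hc
  have hdisjS : ∀ k < L, ∀ t ∈ S, t ∉ X k := by
    intro k hk t ht htX
    obtain ⟨a, b, c, hs0, -⟩ := htris 0 hL
    have hta : T.arc t a := hb t ht a (by rw [hs0]; simp)
    rcases Nat.eq_zero_or_pos k with rfl | hkpos
    · exact irrefl T t (hb t ht t htX)
    · obtain ⟨q, hq, htq⟩ := prop hl htris hbeats 0 (k - 1) (by omega)
        ⟨a, by rw [hs0]; simp, hta⟩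
      rw [show 0 + (k - 1) = k - 1 by omega] at hq
      have hbb := hbeats (k - 1) (by omega)
      rw [show k - 1 + 1 = k by omega] at hbb
      exact T.asymm t q htq (hbb q hq t htX)
  refine ⟨?_, ?_, ?_⟩
  · intro i hi
    show T.IsTriangle (if i = 0 then S else X (i - 1))
    by_cases h0 : i = 0
    · rw [if_pos h0]; exact hS
    · rw [if_neg h0]; exact htris (i - 1) (by omega)
  · intro i hi j hj hij
    show Disjoint (if i = 0 then S else X (i - 1)) (if j = 0 then S else X (j - 1))
    by_cases hi0 : i = 0 <;> by_cases hj0 : j = 0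
    · omega
    · rw [if_pos hi0, if_neg hj0]
      exact Set.disjoint_left.2 fun t ht htj => hdisjS (j - 1) (by omega) t ht htj
    · rw [if_neg hi0, if_pos hj0]
      exact (Set.disjoint_left.2 fun t ht htj => hdisjS (i - 1) (by omega) t ht htj).symm
    · rw [if_neg hi0, if_neg hj0]
      exact hdisj (i - 1) (by omega) (j - 1) (by omega) (by omega)
  · intro i hi
    show T.Beats (if i = 0 then S else X (i - 1)) (if i + 1 = 0 then S else X (i + 1 - 1))
    rw [if_neg (by omega : ¬ i + 1 = 0)]
    by_cases h0 : i = 0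
    · rw [if_pos h0, h0]
      simpa using hb
    · rw [if_neg h0]
      have hbb := hbeats (i - 1) (by omega)
      rw [show i - 1 + 1 = i by omega] at hbb
      rw [show i + 1 - 1 = i by omega]
      exact hbb

lemma append {T : Tournament V} (hl : T.IsLight) {X : ℕ → Set V} {L : ℕ}
    (hc : T.IsC3Chain X L) (hL : 1 ≤ L) {S : Set V} (hS : T.IsTriangle S)
    (hb : T.Beats (X (L - 1)) S) :
    T.IsC3Chain (fun n => if n < L then X n else S) (L + 1) := by
  obtain ⟨htris, hdisj, hbeats⟩ := hc
  have hdisjS : ∀ k < L, ∀ t ∈ S, t ∉ X k := by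
    intro k hk t ht htX
    by_cases hkL : k = L - 1
    · exact irrefl T t (hb t (hkL ▸ htX) t ht)
    · have hq0 : ∃ q ∈ X (k + 1), T.arc t q := by
        obtain ⟨a, b, c, hsk1, -⟩ := htris (k + 1) (by omega)
        exact ⟨a, by rw [hsk1]; simp, hbeats k (by omega) t htX a (by rw [hsk1]; simp)⟩
      obtain ⟨q, hq, htq⟩ := prop hl htris hbeats (k + 1) (L - 1 - (k + 1)) (by omega) hq0
      rw [show k + 1 + (L - 1 - (k + 1)) = L - 1 by omega] at hq
      exact T.asymm t q htq (hb q hq t ht)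
  refine ⟨?_, ?_, ?_⟩
  · intro i hi
    show T.IsTriangle (if i < L then X i else S)
    by_cases h : i < L
    · rw [if_pos h]; exact htris i h
    · rw [if_neg h]; exact hS
  · intro i hi j hj hij
    show Disjoint (if i < L then X i else S) (if j < L then X j else S)
    by_cases hiL : i < L <;> by_cases hjL : j < L
    · rw [if_pos hiL, if_pos hjL]; exact hdisj i hiL j hjL hij
    · rw [if_pos hiL, if_neg hjL]
      exact Set.disjoint_right.2 fun t ht => hdisjS i hiL t ht
    · rw [if_neg hiL, if_pos hjL]
      exact (Set.disjoint_right.2 fun t ht => hdisjS j hjL t ht).symm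
    · omega
  · intro i hi
    show T.Beats (if i < L then X i else S) (if i + 1 < L then X (i + 1) else S)
    by_cases hi1 : i + 1 < L
    · rw [if_pos (by omega : i < L), if_pos hi1]; exact hbeats i hi1
    · rw [if_pos (by omega : i < L), if_neg hi1]
      rw [show i = L - 1 by omega]
      exact hb

lemma lemM {T : Tournament V} (hl : T.IsLight) {X : ℕ → Set V} {L : ℕ}
    (htris : ∀ i < L, T.IsTriangle (X i))
    (hbeats : ∀ i, i + 1 < L → T.Beats (X i) (X (i + 1)))
    (hL : 1 ≤ L) {z x : V}
    (hz : ∀ p ∈ X 0, T.arc z p) (hx : ∀ p ∈ X (L - 1), T.arc p x)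
    (hxz : T.arc x z) : False := by
  obtain ⟨a, b, c, hs0, hab, hbc, hca⟩ := htris 0 (by omega)
  have hq : ∃ q ∈ X 0, T.arc x q := by
    by_contra hno
    push_neg at hno
    have hxX0 : x ∉ X 0 := fun h => T.asymm z x (hz x h) hxz
    have hmem : ∀ p ∈ X 0, p ∈ T.arcNbhd x z := by
      intro p hp
      have hne : p ≠ x := fun h => hxX0 (h ▸ hp)
      exact ⟨hz p hp, (T.total p x hne).resolve_right (hno p hp)⟩
    exact light_nbhd hl hxz a (hmem a (by rw [hs0]; simp)) b (hmem b (by rw [hs0]; simp))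
      c (hmem c (by rw [hs0]; simp)) ⟨hab, hbc, hca⟩
  obtain ⟨q, hq', hxq⟩ := prop hl htris hbeats 0 (L - 1) (by omega) hq
  rw [show 0 + (L - 1) = L - 1 by omega] at hq'
  exact T.asymm x q hxq (hx q hq')

end LightAux

namespace LightAux

open Tournament

variable {V : Type}

lemma final [Fintype V] {T : Tournament V} (hl : T.IsLight) {X : ℕ → Set V} {L : ℕ}
    (hc : T.IsC3Chain X L) (hL : 1 ≤ L)
    (hmax : ∀ X' : ℕ → Set V, ¬ T.IsC3Chain X' (L + 1))
    {u b c v b' c' : V}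
    (hsetL : X (L - 1) = {u, b, c}) (hub : T.arc u b) (hbc : T.arc b c) (hcu : T.arc c u)
    (hset0 : X 0 = {v, b', c'}) (hvb : T.arc v b') (hbc' : T.arc b' c') (hcv : T.arc c' v) :
    T.ColorableOn (T.outN u) 3 ∧ T.ColorableOn (T.inN v) 3 ∧
      T.ColorableOn (T.inN v ∪ T.outN u) 5 := by
  classical
  have htris := hc.1
  have hbeats := hc.2.2
  -- category facts
  have hXcat' : ∀ w, (T.arc u w ∧ T.arc b w ∧ T.arc c w) → ∀ p ∈ X (L - 1), T.arc p w := by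
    intro w hw p hp
    rw [hsetL] at hp
    simp only [Set.mem_insert_iff, Set.mem_singleton_iff] at hp
    rcases hp with rfl | rfl | rfl
    exacts [hw.1, hw.2.1, hw.2.2]
  have hZcat' : ∀ w, (T.arc w v ∧ T.arc w b' ∧ T.arc w c') → ∀ p ∈ X 0, T.arc w p := by
    intro w hw p hp
    rw [hset0] at hp
    simp only [Set.mem_insert_iff, Set.mem_singleton_iff] at hp
    rcases hp with rfl | rfl | rfl
    exacts [hw.1, hw.2.1, hw.2.2]
  have noX : ∀ p q r, (T.arc u p ∧ T.arc b p ∧ T.arc c p) →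
      (T.arc u q ∧ T.arc b q ∧ T.arc c q) → (T.arc u r ∧ T.arc b r ∧ T.arc c r) →
      T.arc p q → T.arc q r → T.arc r p → False := by
    intro p q r hp hq hr h1 h2 h3
    have hS : T.IsTriangle ({p, q, r} : Set V) := ⟨p, q, r, rfl, h1, h2, h3⟩
    have hbS : T.Beats (X (L - 1)) ({p, q, r} : Set V) := by
      intro s hs t ht
      simp only [Set.mem_insert_iff, Set.mem_singleton_iff] at ht
      rcases ht with rfl | rfl | rfl
      exacts [hXcat' t hp s hs, hXcat' t hq s hs, hXcat' t hr s hs]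
    exact hmax _ (append hl hc hL hS hbS)
  have noZ : ∀ p q r, (T.arc p v ∧ T.arc p b' ∧ T.arc p c') →
      (T.arc q v ∧ T.arc q b' ∧ T.arc q c') → (T.arc r v ∧ T.arc r b' ∧ T.arc r c') →
      T.arc p q → T.arc q r → T.arc r p → False := by
    intro p q r hp hq hr h1 h2 h3
    have hS : T.IsTriangle ({p, q, r} : Set V) := ⟨p, q, r, rfl, h1, h2, h3⟩
    have hbS : T.Beats ({p, q, r} : Set V) (X 0) := by
      intro s hs t ht
      simp only [Set.mem_insert_iff, Set.mem_singleton_iff] at hs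
      rcases hs with rfl | rfl | rfl
      exacts [hZcat' s hp t ht, hZcat' s hq t ht, hZcat' s hr t ht]
    exact hmax _ (prepend hl hc hL hS hbS)
  have hM : ∀ x' z', (T.arc u x' ∧ T.arc b x' ∧ T.arc c x') →
      (T.arc z' v ∧ T.arc z' b' ∧ T.arc z' c') → T.arc x' z' → False := by
    intro x' z' hx' hz' harc
    exact lemM hl htris hbeats hL (hZcat' z' hz') (hXcat' x' hx') harc
  -- master transitive set
  have master : T.IsTransitiveSet {w | (T.arc u w ∧ T.arc b w ∧ T.arc c w) ∨ w = u ∨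
      ((T.arc w v ∧ T.arc w b' ∧ T.arc w c') ∧ T.arc w u)} := by
    intro p hp q hq r hr hcyc
    obtain ⟨h1, h2, h3⟩ := hcyc
    simp only [Set.mem_setOf_eq] at hp hq hr
    rcases hp with hp | rfl | hp <;> rcases hq with hq | rfl | hq <;>
      rcases hr with hr | rfl | hr <;>
      first
        | exact T.asymm _ _ h1 h1
        | exact T.asymm _ _ h2 h2
        | exact T.asymm _ _ h3 h3
        | exact noX _ _ _ hp hq hr h1 h2 h3
        | exact noZ _ _ _ hp.1 hq.1 hr.1 h1 h2 h3
        | exact hM _ _ hp hq.1 h1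
        | exact hM _ _ hq hr.1 h2
        | exact hM _ _ hr hp.1 h3
        | exact T.asymm _ _ hp.1 h1
        | exact T.asymm _ _ hq.1 h2
        | exact T.asymm _ _ hr.1 h3
        | exact T.asymm _ _ h1 hq.2
        | exact T.asymm _ _ h2 hr.2
        | exact T.asymm _ _ h3 hp.2
  have transZ : T.IsTransitiveSet {w | T.arc w v ∧ T.arc w b' ∧ T.arc w c'} := by
    intro p hp q hq r hr hcyc
    exact noZ p q r hp hq hr hcyc.1 hcyc.2.1 hcyc.2.2
  -- transitive arc neighborhoods
  have tCU := light_nbhd hl hcu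
  have tBC := light_nbhd hl hbc
  have tVB := light_nbhd hl hvb
  have tBC' := light_nbhd hl hbc'
  refine ⟨?_, ?_, ?_⟩
  -- (1) N⁺(u) with 3 colors
  · refine ⟨fun w => if T.arc w c then 0 else if T.arc w b then 1 else 2, ?_, ?_⟩
    · intro w _; dsimp only; split_ifs <;> omega
    · intro i
      match i with
      | 0 =>
        apply trans_mono tCU
        rintro w ⟨hw, hf⟩
        dsimp only at hf
        split_ifs at hf with h1 h2 <;> try omega
        exact ⟨hw, h1⟩
      | 1 =>
        apply trans_mono tBC
        rintro w ⟨hw, hf⟩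
        dsimp only at hf
        split_ifs at hf with h1 h2 <;> try omega
        have hwc : w ≠ c := fun he => T.asymm c u hcu (by rw [← he]; exact hw)
        exact ⟨(T.total w c hwc).resolve_left h1, h2⟩
      | 2 =>
        apply trans_mono master
        rintro w ⟨hw, hf⟩
        dsimp only at hf
        split_ifs at hf with h1 h2 <;> try omega
        have hwc : w ≠ c := fun he => T.asymm c u hcu (by rw [← he]; exact hw)
        have hwb : w ≠ b := fun he => h1 (by rw [he]; exact hbc)
        exact Or.inl ⟨hw, (T.total b w fun he => hwb he.symm).resolve_right h2,
          (T.total c w fun he => hwc he.symm).resolve_right h1⟩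
      | (n + 3) =>
        intro x hx y hy z hz hcyc
        obtain ⟨-, hf⟩ := hx
        dsimp only at hf
        split_ifs at hf <;> omega
  -- (2) N⁻(v) with 3 colors
  · refine ⟨fun w => if T.arc b' w then 0 else if T.arc c' w then 1 else 2, ?_, ?_⟩
    · intro w _; dsimp only; split_ifs <;> omega
    · intro i
      match i with
      | 0 =>
        apply trans_mono tVB
        rintro w ⟨hw, hf⟩
        dsimp only at hf
        split_ifs at hf with h1 h2 <;> try omega
        exact ⟨h1, hw⟩
      | 1 =>
        apply trans_mono tBC'
        rintro w ⟨hw, hf⟩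
        dsimp only at hf
        split_ifs at hf with h1 h2 <;> try omega
        have hwb : w ≠ b' := fun he => T.asymm v b' hvb (by rw [← he]; exact hw)
        exact ⟨h2, (T.total w b' hwb).resolve_right h1⟩
      | 2 =>
        apply trans_mono transZ
        rintro w ⟨hw, hf⟩
        dsimp only at hf
        split_ifs at hf with h1 h2 <;> try omega
        have hwb : w ≠ b' := fun he => T.asymm v b' hvb (by rw [← he]; exact hw)
        have hwc : w ≠ c' := fun he => h1 (by rw [he]; exact hbc')
        exact ⟨hw, (T.total w b' hwb).resolve_right h1, (T.total w c' hwc).resolve_right h2⟩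
      | (n + 3) =>
        intro x hx y hy z hz hcyc
        obtain ⟨-, hf⟩ := hx
        dsimp only at hf
        split_ifs at hf <;> omega
  -- (3) union with 5 colors
  · refine ⟨fun w => if T.arc u w then (if T.arc w c then 0 else if T.arc w b then 1 else 2)
      else if w = u then 2 else if T.arc b' w then 3 else if T.arc c' w then 4 else 2, ?_, ?_⟩
    · intro w _; dsimp only; split_ifs <;> omega
    · intro i
      have hSv : ∀ w, w ∈ T.inN v ∪ T.outN u → ¬ T.arc u w → T.arc w v := by
        intro w hw hno
        rcases hw with hw | hw
        · exact hw
        · exact absurd hw hno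
      match i with
      | 0 =>
        apply trans_mono tCU
        rintro w ⟨hw, hf⟩
        dsimp only at hf
        split_ifs at hf with h1 h2 h3 h4 h5 h6 <;> try omega
        exact ⟨h1, h2⟩
      | 1 =>
        apply trans_mono tBC
        rintro w ⟨hw, hf⟩
        dsimp only at hf
        split_ifs at hf with h1 h2 h3 h4 h5 h6 <;> try omega
        have hwc : w ≠ c := fun he => T.asymm c u hcu (by rw [← he]; exact h1)
        exact ⟨(T.total w c hwc).resolve_left h2, h3⟩
      | 3 =>
        apply trans_mono tVB
        rintro w ⟨hw, hf⟩
        dsimp only at hf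
        split_ifs at hf with h1 h2 h3 h4 h5 h6 <;> try omega
        exact ⟨h5, hSv w hw h1⟩
      | 4 =>
        apply trans_mono tBC'
        rintro w ⟨hw, hf⟩
        dsimp only at hf
        split_ifs at hf with h1 h2 h3 h4 h5 h6 <;> try omega
        have hwv : T.arc w v := hSv w hw h1
        have hwb : w ≠ b' := fun he => T.asymm v b' hvb (by rw [← he]; exact hwv)
        exact ⟨h6, (T.total w b' hwb).resolve_right h5⟩
      | 2 =>
        apply trans_mono master
        rintro w ⟨hw, hf⟩
        dsimp only at hf
        split_ifs at hf with h1 h2 h3 h4 h5 h6 <;> try omega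
        · -- Xcat branch : h1 : arc u w, ¬ arc w c, ¬ arc w b
          have hwc : w ≠ c := fun he => T.asymm c u hcu (by rw [← he]; exact h1)
          have hwb : w ≠ b := fun he => h2 (by rw [he]; exact hbc)
          exact Or.inl ⟨h1, (T.total b w fun he => hwb he.symm).resolve_right h3,
            (T.total c w fun he => hwc he.symm).resolve_right h2⟩
        · -- w = u branch
          exact Or.inr (Or.inl h4)
        · -- Zcat branch
          have hwv : T.arc w v := hSv w hw h1
          have hwb : w ≠ b' := fun he => T.asymm v b' hvb (by rw [← he]; exact hwv)
          have hwc : w ≠ c' := fun he => h5 (by rw [he]; exact hbc')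
          exact Or.inr (Or.inr ⟨⟨hwv, (T.total w b' hwb).resolve_right h5,
            (T.total w c' hwc).resolve_right h6⟩, (T.total w u h4).resolve_right h1⟩)
      | (n + 5) =>
        intro x hx y hy z hz hcyc
        obtain ⟨-, hf⟩ := hx
        dsimp only at hf
        split_ifs at hf <;> omega

end LightAux

theorem stmt_11 {V : Type} [Fintype V] (T : Tournament V) (hlight : T.IsLight)
    (htri : ∃ a b c : V, T.arc a b ∧ T.arc b c ∧ T.arc c a) :
    ∃ u v : V, u ≠ v ∧
      T.ColorableOn (T.outN u) 3 ∧ T.ColorableOn (T.inN v) 3 ∧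
      T.ColorableOn (T.inN v ∪ T.outN u) 5 := by
  classical
  obtain ⟨a0, b0, c0, h01, h02, h03⟩ := htri
  have hVne : Nonempty V := ⟨a0⟩
  have hcard : 1 ≤ Fintype.card V := Fintype.card_pos
  have hP1 : ∃ Y : ℕ → Set V, T.IsC3Chain Y 1 := by
    refine ⟨fun _ => {a0, b0, c0}, ?_, ?_, ?_⟩
    · intro i _; exact ⟨a0, b0, c0, rfl, h01, h02, h03⟩
    · intro i hi j hj hij; omega
    · intro i hi; exact absurd hi (by omega)
  have hPL := Nat.findGreatest_spec (P := fun L => ∃ Y : ℕ → Set V, T.IsC3Chain Y L)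
    hcard hP1
  set L := Nat.findGreatest (fun L => ∃ Y : ℕ → Set V, T.IsC3Chain Y L) (Fintype.card V)
    with hLdef
  have hL1 : 1 ≤ L := Nat.le_findGreatest (P := fun L => ∃ Y : ℕ → Set V, T.IsC3Chain Y L)
    hcard hP1
  have hmax : ∀ Y : ℕ → Set V, ¬ T.IsC3Chain Y (L + 1) := by
    intro Y hY
    have hle : L + 1 ≤ Fintype.card V := LightAux.chain_le_card hY
    exact Nat.findGreatest_is_greatest (P := fun L => ∃ Y : ℕ → Set V, T.IsC3Chain Y L)
      (Nat.lt_succ_self L) hle ⟨Y, hY⟩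
  obtain ⟨X, hX⟩ := hPL
  obtain ⟨u0, bL, cL, hsetL, hub, hbc, hcu⟩ := hX.1 (L - 1) (by omega)
  obtain ⟨v0, b0', c0', hset0, hvb, hbc', hcv⟩ := hX.1 0 (by omega)
  by_cases huv : u0 = v0
  · have hset0' : X 0 = {b0', c0', v0} := by
      rw [hset0]; ext x
      simp only [Set.mem_insert_iff, Set.mem_singleton_iff]
      tauto
    have hne : u0 ≠ b0' := by
      rw [huv]
      intro he
      exact LightAux.irrefl T b0' (he ▸ hvb)
    obtain ⟨hA, hB, hC⟩ :=
      LightAux.final hlight hX hL1 hmax hsetL hub hbc hcu hset0' hbc' hcv hvb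
    exact ⟨u0, b0', hne, hA, hB, hC⟩
  · obtain ⟨hA, hB, hC⟩ :=
      LightAux.final hlight hX hL1 hmax hsetL hub hbc hcu hset0 hvb hbc' hcv
    exact ⟨u0, v0, huv, hA, hB, hC⟩
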